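/- Let γ be a self-conjugate partition corresponding to the partition λ = (λ₁,…,λ_k) into distinct odd parts. For any box (i,j) in the Young diagram of γ with j ≤ k < i (below the Durfee square), the hook length satisfies h_γ(i,j) = (λ_j + 1)/2 + j − i − 1 + #{m : j ≤ m ≤ k and λ_m ≥ 2i − 2m + 1}. -/

import Mathlib

/-- Hook length of the (0-indexed) cell `(i, j)` of a Young diagram. -/
def hookLen (γ : YoungDiagram) (i j : ℕ) : ℕ :=
  γ.rowLen i + γ.colLen j - i - j - 1

/-- A partition (Young diagram) is `t`-core if no hook length is divisible by `t`. -/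
def IsTCore (γ : YoungDiagram) (t : ℕ) : Prop :=
  ∀ c ∈ γ.cells, ¬ t ∣ hookLen γ c.1 c.2

/-- The side length of the Durfee square: the number of diagonal cells. -/
def durfee (γ : YoungDiagram) : ℕ :=
  (γ.cells.filter fun c => c.1 = c.2).card

lemma diag_mem_iff (γ : YoungDiagram) (m : ℕ) : (m, m) ∈ γ ↔ m < durfee γ := by
  constructor
  · intro hm
    have : (Finset.range (m + 1)).card ≤
        (γ.cells.filter fun c => c.1 = c.2).card := by
      apply Finset.card_le_card_of_injOn (fun p => (p, p))
      · intro p hp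
        simp only [Finset.mem_coe, Finset.mem_range] at hp
        simp only [Finset.mem_coe, Finset.mem_filter, YoungDiagram.mem_cells]
        exact ⟨γ.up_left_mem (Nat.lt_succ_iff.mp hp) (Nat.lt_succ_iff.mp hp) hm, trivial⟩
      · intro a _ b _ h
        simpa using congrArg Prod.fst h
    simpa [durfee] using this
  · intro hm
    by_contra hnot
    have : (γ.cells.filter fun c => c.1 = c.2).card ≤ (Finset.range m).card := by
      apply Finset.card_le_card_of_injOn Prod.fst
      · intro c hc
        simp only [Finset.mem_coe, Finset.mem_filter, YoungDiagram.mem_cells] at hc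
        rw [Finset.mem_coe, Finset.mem_range]
        by_contra h
        push_neg at h
        exact hnot (γ.up_left_mem h (hc.2 ▸ h) hc.1)
      · intro a ha b hb h
        simp only [Finset.mem_coe, Finset.mem_filter] at ha hb
        exact Prod.ext h (by rw [← ha.2, ← hb.2, h])
    simp only [Finset.card_range] at this
    simp only [durfee] at hm
    omega

theorem stmt3 (γ : YoungDiagram) (hsc : γ.transpose = γ) (k : ℕ) (hk : k = durfee γ)
    (lam : ℕ → ℕ) (hlam : ∀ i < k, lam i = hookLen γ i i)
    (i j : ℕ) (hjk : j < k) (hki : k ≤ i) (hcell : (i, j) ∈ γ.cells) :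
    (hookLen γ i j : ℤ) = (((lam j + 1) / 2 : ℕ) : ℤ) + j - i - 1 +
      ((Finset.Ico j k).filter fun m => lam m ≥ 2 * i - 2 * m + 1).card := by
  have hcol : ∀ m, γ.colLen m = γ.rowLen m := by
    intro m
    conv_lhs => rw [← hsc]
    exact γ.colLen_transpose m
  rw [YoungDiagram.mem_cells] at hcell
  -- rowLen i ≤ k
  have hik : ¬ (i, k) ∈ γ := by
    intro h
    have := (diag_mem_iff γ k).mp (γ.up_left_mem hki le_rfl h)
    omega
  have hri : γ.rowLen i ≤ k := by
    by_contra h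
    push_neg at h
    exact hik (YoungDiagram.mem_iff_lt_rowLen.mpr h)
  have hrij : j < γ.rowLen i := YoungDiagram.mem_iff_lt_rowLen.mp hcell
  -- diagonal rows
  have hdiag : ∀ m < k, m < γ.rowLen m := by
    intro m hm
    exact YoungDiagram.mem_iff_lt_rowLen.mp ((diag_mem_iff γ m).mpr (hk ▸ hm))
  have hlam' : ∀ m < k, lam m = 2 * γ.rowLen m - 2 * m - 1 := by
    intro m hm
    have := hdiag m hm
    rw [hlam m hm]
    unfold hookLen
    rw [hcol m]
    omega
  -- the filter equals Ico j (rowLen i)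
  have hfilt : ((Finset.Ico j k).filter fun m => lam m ≥ 2 * i - 2 * m + 1) =
      Finset.Ico j (γ.rowLen i) := by
    ext m
    simp only [Finset.mem_filter, Finset.mem_Ico]
    constructor
    · rintro ⟨⟨h1, h2⟩, h3⟩
      refine ⟨h1, ?_⟩
      have hl := hlam' m h2
      have hd := hdiag m h2
      have hmi : m ≤ i := le_trans (le_of_lt h2) hki
      have : i < γ.rowLen m := by omega
      have : (i, m) ∈ γ := YoungDiagram.mem_iff_lt_colLen.mpr (by rw [hcol]; exact this)
      exact YoungDiagram.mem_iff_lt_rowLen.mp this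
    · rintro ⟨h1, h2⟩
      have h2' : m < k := lt_of_lt_of_le h2 hri
      have hl := hlam' m h2'
      have hd := hdiag m h2'
      have : (i, m) ∈ γ := YoungDiagram.mem_iff_lt_rowLen.mpr h2
      have : i < γ.rowLen m := by
        rw [← hcol]; exact YoungDiagram.mem_iff_lt_colLen.mp this
      exact ⟨⟨h1, h2'⟩, by omega⟩
  rw [hfilt, Nat.card_Ico]
  -- lam j value
  have hlj := hlam' j hjk
  have hdj := hdiag j hjk
  have hij : i < γ.rowLen j := by
    rw [← hcol]; exact YoungDiagram.mem_iff_lt_colLen.mp hcell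
  have hlj2 : (lam j + 1) / 2 = γ.rowLen j - j := by omega
  rw [hlj2]
  unfold hookLen
  rw [hcol j]
  have h1 : j + 1 ≤ γ.rowLen j := hdj
  push_cast [Nat.sub_add_cancel, hij.le, hrij.le]
  omega
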